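/- arXiv:1702.00477 — 7 statements merged into one kernel-verified Lean document; each statement's English description precedes it below -/
import Mathlib

section
/- If p ∈ P is dominated by another point p' ∈ P (p' ≺ p), then D(P, Q) = D(P \ {p}, Q). Similarly, if q ∈ Q is dominated by another point of Q, or dominated by some point of P, then D(P, Q) = D(P, Q \ {q}). -/
open Finset

/-- A point in `ℝ^m`. -/
abbrev Pt (m : ℕ) := Fin m → ℝ

/-- `p` weakly dominates `q` (minimization): componentwise `≤`. -/
def wdom {m : ℕ} (p q : Pt m) : Prop := ∀ i, p i ≤ q i

/-- `p` dominates `q`: componentwise `≤` with at least one strict inequality. -/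
def sdom {m : ℕ} (p q : Pt m) : Prop := wdom p q ∧ ∃ i, p i < q i

/-- Set `P` weakly dominates set `Q`: every `q ∈ Q` is weakly dominated by some `p ∈ P`. -/
def setWDom {m : ℕ} (P Q : Finset (Pt m)) : Prop := ∀ q ∈ Q, ∃ p ∈ P, wdom p q

/-- L1 (Manhattan) distance between points. -/
noncomputable def l1 {m : ℕ} (p q : Pt m) : ℝ := ∑ j, |p j - q j|

/-- The dominance move `D(P,Q)`: the minimum total L1 move distance of points of `P`
(each `p` moved to `f p`) so that the moved set weakly dominates `Q`. -/
noncomputable def DoM {m : ℕ} (P Q : Finset (Pt m)) : ℝ :=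
  sInf { c | ∃ f : Pt m → Pt m, setWDom (P.image f) Q ∧ c = ∑ p ∈ P, l1 p (f p) }

/-- `d(p, S)`: the minimum L1 move of `p` needed to weakly dominate all of `S`,
namely `Σ_j (p^j − min({p^j} ∪ {s^j : s ∈ S}))`. -/
noncomputable def dCost {m : ℕ} (p : Pt m) (S : Finset (Pt m)) : ℝ :=
  ∑ j, (p j - (insert p S).inf' (insert_nonempty p S) (fun s => s j))

/-- `d(a, b)` between two points: `Σ_j (a^j − min(a^j, b^j))`. -/
noncomputable def dpt {m : ℕ} (a b : Pt m) : ℝ := ∑ j, (a j - min (a j) (b j))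

/-- `b` is an inward neighbor of `q` in `R`: `b ∈ R \ {q}` minimizes `d(·, q)`. -/
def isNb {m : ℕ} (R : Finset (Pt m)) (q b : Pt m) : Prop :=
  b ∈ R.erase q ∧ ∀ r ∈ R.erase q, dpt b q ≤ dpt r q

/-- The union of the point-sets of a list of groups. -/
noncomputable def unionSnd {m : ℕ} (S : List (Pt m × Finset (Pt m))) : Finset (Pt m) :=
  S.foldr (fun g acc => g.2 ∪ acc) ∅

/-- `S` is a partition of `P` to `Q`: each group is a point of `P` together with
a subset of `Q`, and the subsets cover `Q`. -/
def IsPartition {m : ℕ} (P Q : Finset (Pt m)) (S : List (Pt m × Finset (Pt m))) : Prop :=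
  (∀ g ∈ S, g.1 ∈ P ∧ g.2 ⊆ Q) ∧ unionSnd S = Q

/-- Total cost of a partition: the sum of the group costs `d(p_s, Q_s)`. -/
noncomputable def pcost {m : ℕ} (S : List (Pt m × Finset (Pt m))) : ℝ :=
  (S.map (fun g => dCost g.1 g.2)).sum


private lemma l1_nonneg {m : ℕ} (p q : Pt m) : 0 ≤ l1 p q :=
  Finset.sum_nonneg fun _ _ => abs_nonneg _

private lemma l1_self {m : ℕ} (p : Pt m) : l1 p p = 0 := by
  simp [l1]

private lemma cost_nonneg {m : ℕ} (P : Finset (Pt m)) (f : Pt m → Pt m) :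
    0 ≤ ∑ p ∈ P, l1 p (f p) :=
  Finset.sum_nonneg fun p _ => l1_nonneg p (f p)

private lemma costset_nonneg {m : ℕ} (P Q : Finset (Pt m)) :
    ∀ c ∈ {c | ∃ f : Pt m → Pt m, setWDom (P.image f) Q ∧ c = ∑ p ∈ P, l1 p (f p)},
      (0:ℝ) ≤ c := by
  rintro c ⟨f, -, rfl⟩; exact cost_nonneg P f

private lemma costset_nonempty {m : ℕ} (P Q : Finset (Pt m)) (hP : P.Nonempty) :
    Set.Nonempty {c | ∃ f : Pt m → Pt m, setWDom (P.image f) Q ∧ c = ∑ p ∈ P, l1 p (f p)} := by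
  classical
  set g : Pt m := fun j => (insert (fun _ => (0:ℝ)) Q).inf' (insert_nonempty _ _) (fun s => s j)
    with hg
  refine ⟨∑ p ∈ P, l1 p g, fun _ => g, ?_, rfl⟩
  intro q hq
  obtain ⟨p0, hp0⟩ := hP
  exact ⟨g, Finset.mem_image.mpr ⟨p0, hp0, rfl⟩,
    fun j => Finset.inf'_le _ (Finset.mem_insert_of_mem hq)⟩

private lemma myInf_eq {A B : Set ℝ} (hA : A.Nonempty) (hB : B.Nonempty)
    (hA0 : ∀ a ∈ A, (0:ℝ) ≤ a) (hB0 : ∀ b ∈ B, (0:ℝ) ≤ b)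
    (hAB : ∀ a ∈ A, ∃ b ∈ B, b ≤ a) (hBA : ∀ b ∈ B, ∃ a ∈ A, a ≤ b) :
    sInf A = sInf B := by
  apply le_antisymm
  · apply le_csInf hB
    intro b hb
    obtain ⟨a, ha, hab⟩ := hBA b hb
    exact (csInf_le ⟨0, fun x hx => hA0 x hx⟩ ha).trans hab
  · apply le_csInf hA
    intro a ha
    obtain ⟨b, hb, hba⟩ := hAB a ha
    exact (csInf_le ⟨0, fun x hx => hB0 x hx⟩ hb).trans hba

private lemma coord (x y a b : ℝ) (hxy : x ≤ y) : |x - min a b| ≤ |x - a| + |y - b| := by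
  rcases le_total a b with h | h
  · rw [min_eq_left h]
    have := abs_nonneg (y - b); linarith
  · rw [min_eq_right h]
    rcases le_total x b with h2 | h2
    · rw [abs_of_nonpos (by linarith)]
      have h3 : a - x ≤ |x - a| := by rw [abs_sub_comm]; exact le_abs_self _
      have := abs_nonneg (y - b); linarith
    · rw [abs_of_nonneg (by linarith)]
      have h4 : y - b ≤ |y - b| := le_abs_self _
      have := abs_nonneg (x - a); linarith

private lemma coord2 (x a b : ℝ) (hxb : x ≤ b) : |x - min a b| ≤ |x - a| := by
  rcases le_total a b with h | h
  · rw [min_eq_left h]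
  · rw [min_eq_right h, abs_of_nonpos (by linarith)]
    have h3 : b - x ≤ a - x := by linarith
    have h4 : a - x ≤ |x - a| := by rw [abs_sub_comm]; exact le_abs_self _
    linarith

theorem stmt3 {m : ℕ} (P Q : Finset (Pt m)) (hP : P.Nonempty) (hQ : Q.Nonempty) :
    (∀ p ∈ P, (∃ p' ∈ P, sdom p' p) → DoM P Q = DoM (P.erase p) Q) ∧
    (∀ q ∈ Q, ((∃ q' ∈ Q, sdom q' q) ∨ (∃ p ∈ P, sdom p q)) →
      DoM P Q = DoM P (Q.erase q)) := by
  classical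
  constructor
  · rintro p hp ⟨p', hp'P, hsd⟩
    have hne : p' ≠ p := by
      intro h
      obtain ⟨i, hi⟩ := hsd.2
      rw [h] at hi
      exact lt_irrefl _ hi
    have hp'e : p' ∈ P.erase p := Finset.mem_erase.mpr ⟨hne, hp'P⟩
    rw [DoM, DoM]
    apply myInf_eq (costset_nonempty _ _ hP) (costset_nonempty _ _ ⟨p', hp'e⟩)
      (costset_nonneg _ _) (costset_nonneg _ _)
    · rintro c ⟨f, hf, rfl⟩
      set g : Pt m := fun j => min (f p' j) (f p j) with hg
      refine ⟨∑ x ∈ P.erase p, l1 x (Function.update f p' g x),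
        ⟨Function.update f p' g, ?_, rfl⟩, ?_⟩
      · intro q hq
        obtain ⟨y, hy, hwd⟩ := hf q hq
        obtain ⟨r, hr, rfl⟩ := Finset.mem_image.mp hy
        by_cases hrp : r = p ∨ r = p'
        · refine ⟨g, Finset.mem_image.mpr ⟨p', hp'e, Function.update_self _ _ _⟩, fun j => ?_⟩
          rcases hrp with rfl | rfl
          · exact (min_le_right _ _).trans (hwd j)
          · exact (min_le_left _ _).trans (hwd j)
        · push_neg at hrp
          refine ⟨f r, Finset.mem_image.mpr ⟨r, Finset.mem_erase.mpr ⟨hrp.1, hr⟩, ?_⟩, hwd⟩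
          rw [Function.update_of_ne hrp.2]
      · have key : l1 p' g ≤ l1 p' (f p') + l1 p (f p) := by
          rw [l1, l1, l1, ← Finset.sum_add_distrib]
          exact Finset.sum_le_sum fun j _ => coord (p' j) (p j) (f p' j) (f p j) (hsd.1 j)
        have e1 : ∑ x ∈ P.erase p, l1 x (Function.update f p' g x)
            = l1 p' g + ∑ x ∈ (P.erase p).erase p', l1 x (f x) := by
          rw [← Finset.add_sum_erase _ _ hp'e, Function.update_self]
          congr 1
          exact Finset.sum_congr rfl fun x hx => by
            rw [Function.update_of_ne (Finset.mem_erase.mp hx).1]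
        have e2 : ∑ x ∈ P, l1 x (f x)
            = l1 p (f p) + (l1 p' (f p') + ∑ x ∈ (P.erase p).erase p', l1 x (f x)) := by
          rw [← Finset.add_sum_erase _ _ hp, ← Finset.add_sum_erase _ _ hp'e]
        rw [e1, e2]
        linarith
    · rintro c ⟨f, hf, rfl⟩
      refine ⟨∑ x ∈ P, l1 x (Function.update f p p x), ⟨Function.update f p p, ?_, rfl⟩, ?_⟩
      · intro q hq
        obtain ⟨y, hy, hwd⟩ := hf q hq
        obtain ⟨r, hr, rfl⟩ := Finset.mem_image.mp hy
        exact ⟨f r, Finset.mem_image.mpr ⟨r, (Finset.mem_erase.mp hr).2,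
          by rw [Function.update_of_ne (Finset.mem_erase.mp hr).1]⟩, hwd⟩
      · have e1 : ∑ x ∈ P, l1 x (Function.update f p p x)
            = l1 p p + ∑ x ∈ P.erase p, l1 x (f x) := by
          rw [← Finset.add_sum_erase _ _ hp, Function.update_self]
          congr 1
          exact Finset.sum_congr rfl fun x hx => by
            rw [Function.update_of_ne (Finset.mem_erase.mp hx).1]
        rw [e1, l1_self]
        linarith [le_refl (∑ x ∈ P.erase p, l1 x (f x))]
  · rintro q hq hcase
    rw [DoM, DoM]
    apply myInf_eq (costset_nonempty _ _ hP) (costset_nonempty _ _ hP)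
      (costset_nonneg _ _) (costset_nonneg _ _)
    · rintro c ⟨f, hf, rfl⟩
      exact ⟨_, ⟨f, fun r hr => hf r (Finset.mem_of_mem_erase hr), rfl⟩, le_refl _⟩
    · rintro c ⟨f, hf, rfl⟩
      rcases hcase with ⟨q', hq'Q, hsd⟩ | ⟨p0, hp0, hsd⟩
      · have hne : q' ≠ q := by
          intro h
          obtain ⟨i, hi⟩ := hsd.2
          rw [h] at hi
          exact lt_irrefl _ hi
        refine ⟨_, ⟨f, ?_, rfl⟩, le_refl _⟩
        intro r hr
        by_cases hrq : r = q
        · subst hrq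
          obtain ⟨y, hy, hwd⟩ := hf q' (Finset.mem_erase.mpr ⟨hne, hq'Q⟩)
          exact ⟨y, hy, fun j => (hwd j).trans (hsd.1 j)⟩
        · exact hf r (Finset.mem_erase.mpr ⟨hrq, hr⟩)
      · set g : Pt m := fun j => min (f p0 j) (q j) with hg
        refine ⟨∑ x ∈ P, l1 x (Function.update f p0 g x),
          ⟨Function.update f p0 g, ?_, rfl⟩, ?_⟩
        · intro r hr
          by_cases hrq : r = q
          · subst hrq
            exact ⟨g, Finset.mem_image.mpr ⟨p0, hp0, Function.update_self _ _ _⟩,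
              fun j => min_le_right _ _⟩
          · obtain ⟨y, hy, hwd⟩ := hf r (Finset.mem_erase.mpr ⟨hrq, hr⟩)
            obtain ⟨s, hs, rfl⟩ := Finset.mem_image.mp hy
            by_cases hsp : s = p0
            · subst hsp
              exact ⟨g, Finset.mem_image.mpr ⟨s, hs, Function.update_self _ _ _⟩,
                fun j => (min_le_left _ _).trans (hwd j)⟩
            · exact ⟨f s, Finset.mem_image.mpr ⟨s, hs, Function.update_of_ne hsp _ _⟩, hwd⟩
        · have key : l1 p0 g ≤ l1 p0 (f p0) := by
            rw [l1, l1]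
            exact Finset.sum_le_sum fun j _ => coord2 (p0 j) (f p0 j) (q j) (hsd.1 j)
          have e1 : ∑ x ∈ P, l1 x (Function.update f p0 g x)
              = l1 p0 g + ∑ x ∈ P.erase p0, l1 x (f x) := by
            rw [← Finset.add_sum_erase _ _ hp0, Function.update_self]
            congr 1
            exact Finset.sum_congr rfl fun x hx => by
              rw [Function.update_of_ne (Finset.mem_erase.mp hx).1]
          have e2 : ∑ x ∈ P, l1 x (f x)
              = l1 p0 (f p0) + ∑ x ∈ P.erase p0, l1 x (f x) :=
            (Finset.add_sum_erase _ _ hp0).symm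
          rw [e1, e2]
          linarith
end

section
/- Decomposition of the single-point cover cost: for any point p ∈ R^m and finite sets Q_s, Q_t ⊂ R^m, d(p, Q_s ∪ Q_t) = d(p, Q_s) + d(I_{Q_s ∪ {p}}, Q_t), where I_{Q_s ∪ {p}} is the componentwise minimum (ideal point) of Q_s ∪ {p}. -/
open Finset

theorem stmt7 {m : ℕ} (p : Pt m) (Qs Qt : Finset (Pt m)) :
    dCost p (Qs ∪ Qt)
      = dCost p Qs
        + dCost (fun j => (insert p Qs).inf' (insert_nonempty p Qs) (fun s => s j)) Qt := by
  classical
  set I : Pt m := fun j => (insert p Qs).inf' (insert_nonempty p Qs) (fun s => s j) with hI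
  have key : ∀ j, (insert p (Qs ∪ Qt)).inf' (insert_nonempty _ _) (fun s => s j)
      = (insert I Qt).inf' (insert_nonempty _ _) (fun s => s j) := by
    intro j
    rcases Qt.eq_empty_or_nonempty with h | h
    · subst h; simp [hI]
    · have h1 : (insert p Qs).Nonempty := insert_nonempty _ _
      have e1 : insert p (Qs ∪ Qt) = (insert p Qs) ∪ Qt := by
        ext x; simp [or_assoc]
      simp only [e1]; rw [inf'_union h1 h, inf'_insert h (f := fun s => s j)]
  unfold dCost
  rw [← Finset.sum_add_distrib]
  apply Finset.sum_congr rfl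
  intro j _
  rw [key j]
  ring
end

section
/- Singleton-group optimality: let S* be an optimal (minimum-cost) partition of P to Q, and let ({p_s}, {q_s}) be a group of S* whose Q-part is a singleton {q_s}. Then p_s attains the minimum of d(p, {q_s}) over all p ∈ P, i.e., d(p_s, {q_s}) = min_{p ∈ P} d(p, {q_s}). -/
open Finset

lemma unionSnd_append {m : ℕ} (a b : List (Pt m × Finset (Pt m))) :
    unionSnd (a ++ b) = unionSnd a ∪ unionSnd b := by
  induction a with
  | nil => simp [unionSnd]
  | cons g t ih => simp [unionSnd, List.foldr] at ih ⊢; rw [ih]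

lemma pcost_append {m : ℕ} (a b : List (Pt m × Finset (Pt m))) :
    pcost (a ++ b) = pcost a + pcost b := by
  simp [pcost]

theorem stmt11 {m : ℕ} (P Q : Finset (Pt m)) (hP : P.Nonempty)
    (S : List (Pt m × Finset (Pt m)))
    (hS : IsPartition P Q S)
    (hopt : ∀ T, IsPartition P Q T → pcost S ≤ pcost T)
    (ps qs : Pt m) (hmem : (ps, ({qs} : Finset (Pt m))) ∈ S) :
    dCost ps {qs} = P.inf' hP (fun p => dCost p {qs}) := by
  obtain ⟨pm, hpmP, hpm⟩ := Finset.exists_mem_eq_inf' hP (fun p => dCost p {qs})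
  have hpsP : ps ∈ P := (hS.1 _ hmem).1
  have h1 : P.inf' hP (fun p => dCost p {qs}) ≤ dCost ps {qs} :=
    Finset.inf'_le _ hpsP
  obtain ⟨S₁, S₂, rfl⟩ := List.append_of_mem hmem
  set g : Pt m × Finset (Pt m) := (ps, ({qs} : Finset (Pt m)))
  set g' : Pt m × Finset (Pt m) := (pm, ({qs} : Finset (Pt m)))
  have hT : IsPartition P Q (S₁ ++ g' :: S₂) := by
    constructor
    · intro x hx
      rcases List.mem_append.1 hx with h | h
      · exact hS.1 x (List.mem_append.2 (Or.inl h))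
      · rcases List.mem_cons.1 h with rfl | h
        · exact ⟨hpmP, (hS.1 g (List.mem_append.2 (Or.inr List.mem_cons_self))).2⟩
        · exact hS.1 x (List.mem_append.2 (Or.inr (List.mem_cons.2 (Or.inr h))))
    · have := hS.2
      rw [unionSnd_append] at this ⊢
      rw [← this]
      congr 1
  have h2 := hopt _ hT
  rw [pcost_append, pcost_append] at h2
  have hc : pcost (g :: S₂) = dCost ps {qs} + pcost S₂ := by simp [pcost]; rfl
  have hc' : pcost (g' :: S₂) = dCost pm {qs} + pcost S₂ := by simp [pcost]; rfl
  rw [hc, hc'] at h2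
  have h3 : dCost ps {qs} ≤ dCost pm {qs} := by linarith
  rw [hpm]
  linarith
end

section
/- No long inward-neighbor cycles in 2D: let R be a finite set of pairwise nondominated points in R^2 and q_1, ..., q_n (n ≥ 3) distinct points of R sorted increasingly by the first coordinate (hence decreasingly by the second). Then these points cannot form a directed cycle under the inward-neighbor relation; concretely, if q_2 is the inward neighbor of q_1 (i.e., q_2 = argmin_{r ∈ R\{q_1}} d(r, q_1)), then q_1 is not the inward neighbor of q_n, because d(q_2, q_n) < d(q_1, q_n). -/
open Finset

theorem stmt13 (n : ℕ) (hn : 3 ≤ n) (q : Fin n → Pt 2)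
    (h1 : StrictMono (fun i => q i 0))
    (h2 : StrictAnti (fun i => q i 1)) :
    dpt (q ⟨1, by omega⟩) (q ⟨n - 1, by omega⟩)
      < dpt (q ⟨0, by omega⟩) (q ⟨n - 1, by omega⟩) := by
  have hlt10 : (⟨1, by omega⟩ : Fin n) < ⟨n - 1, by omega⟩ := by
    simp [Fin.lt_def]; omega
  have hlt00 : (⟨0, by omega⟩ : Fin n) < ⟨n - 1, by omega⟩ := by
    simp [Fin.lt_def]; omega
  have hlt01 : (⟨0, by omega⟩ : Fin n) < ⟨1, by omega⟩ := by
    simp [Fin.lt_def]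
  have ha := h1 hlt10
  have hb := h1 hlt00
  have hc := h2 hlt10
  have hd := h2 hlt00
  have he := h2 hlt01
  simp only at ha hb hc hd he
  simp only [dpt, Fin.sum_univ_two]
  rw [min_eq_left ha.le, min_eq_left hb.le, min_eq_right hc.le, min_eq_right hd.le]
  linarith
end

section
/- Inward-neighbor grouping yields a valid partition (2D): let P and Q be finite sets of points in R^2 such that P ∪ Q contains no dominated points (and no point of Q is weakly dominated by a point of P). Form groups by placing each q ∈ Q together with its inward neighbor in P ∪ Q (merging groups that share points). If no two points of Q are mutual inward neighbors, then every resulting group contains exactly one point of P. -/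
open Finset

section Aux

variable (P Q : Finset (Pt 2)) (nb : Pt 2 → Pt 2)

lemma sub_min_eq' (x y : ℝ) : x - min x y = max (x - y) 0 := by
  rcases le_total x y with h | h
  · rw [min_eq_left h, sub_self, max_eq_right (sub_nonpos.mpr h)]
  · rw [min_eq_right h, max_eq_left (sub_nonneg.mpr h)]

lemma dpt_eq' (a b : Pt 2) : dpt a b = max (a 0 - b 0) 0 + max (a 1 - b 1) 0 := by
  simp [dpt, Fin.sum_univ_two, sub_min_eq']

variable (hnodom : ∀ a ∈ P ∪ Q, ∀ b ∈ P ∪ Q, a ≠ b → ¬ sdom a b)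

include hnodom in
lemma anti2 {a b : Pt 2} (ha : a ∈ P ∪ Q) (hb : b ∈ P ∪ Q) (h : a 0 < b 0) : b 1 < a 1 := by
  by_contra h1
  push_neg at h1
  exact hnodom a ha b hb (fun e => absurd h (by rw [e]; exact lt_irrefl _))
    ⟨fun i => by fin_cases i <;> [exact h.le; exact h1], ⟨0, h⟩⟩

include hnodom in
lemma anti1 {a b : Pt 2} (ha : a ∈ P ∪ Q) (hb : b ∈ P ∪ Q) (hne : a ≠ b) : a 0 ≠ b 0 := by
  intro h0
  rcases lt_trichotomy (a 1) (b 1) with h1 | h1 | h1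
  · exact hnodom a ha b hb hne ⟨fun i => by fin_cases i <;> [exact h0.le; exact h1.le], ⟨1, h1⟩⟩
  · exact hne (funext fun i => by fin_cases i <;> assumption)
  · exact hnodom b hb a ha hne.symm
      ⟨fun i => by fin_cases i <;> [exact h0.ge; exact h1.le], ⟨1, h1⟩⟩

variable (hnb : ∀ q ∈ Q, isNb (P ∪ Q) q (nb q))

include hnodom hnb in
lemma no_between {q r : Pt 2} (hq : q ∈ Q) (hr : r ∈ P ∪ Q) (hrq : r ≠ q) :
    ¬ ((nb q) 0 < r 0 ∧ r 0 < q 0) ∧ ¬ (q 0 < r 0 ∧ r 0 < (nb q) 0) := by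
  obtain ⟨hbmem, hbmin⟩ := hnb q hq
  have hbR : nb q ∈ P ∪ Q := Finset.mem_of_mem_erase hbmem
  have hqR : q ∈ P ∪ Q := Finset.mem_union_right _ hq
  have hrmem : r ∈ (P ∪ Q).erase q := Finset.mem_erase.mpr ⟨hrq, hr⟩
  have hmin := hbmin r hrmem
  rw [dpt_eq', dpt_eq'] at hmin
  constructor
  · rintro ⟨h1, h2⟩
    have hb0q0 : nb q 0 < q 0 := h1.trans h2
    have hq1b1 : q 1 < nb q 1 := anti2 P Q hnodom hbR hqR hb0q0
    have hq1r1 : q 1 < r 1 := anti2 P Q hnodom hr hqR h2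
    have hr1b1 : r 1 < nb q 1 := anti2 P Q hnodom hbR hr h1
    rw [max_eq_right (sub_nonpos.mpr hb0q0.le), max_eq_left (sub_nonneg.mpr hq1b1.le),
        max_eq_right (sub_nonpos.mpr h2.le), max_eq_left (sub_nonneg.mpr hq1r1.le)] at hmin
    linarith
  · rintro ⟨h1, h2⟩
    have hq0b0 : q 0 < nb q 0 := h1.trans h2
    have hb1q1 : nb q 1 < q 1 := anti2 P Q hnodom hqR hbR hq0b0
    have hr1q1 : r 1 < q 1 := anti2 P Q hnodom hqR hr h1
    rw [max_eq_left (sub_nonneg.mpr hq0b0.le), max_eq_right (sub_nonpos.mpr hb1q1.le),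
        max_eq_left (sub_nonneg.mpr h1.le), max_eq_right (sub_nonpos.mpr hr1q1.le)] at hmin
    linarith

variable (hnomutual : ∀ q1 ∈ Q, ∀ q2 ∈ Q, nb q1 = q2 → nb q2 ≠ q1)

include hnodom hnb hnomutual in
lemma escape : ∀ q ∈ Q, ∃ n, nb^[n] q ∈ P := by
  intro q hq
  by_contra hcon
  push_neg at hcon
  have hQiter : ∀ n, nb^[n] q ∈ Q := by
    intro n
    induction n with
    | zero => exact hq
    | succ n ih =>
      rw [Function.iterate_succ_apply']
      have hmem : nb (nb^[n] q) ∈ P ∪ Q := Finset.mem_of_mem_erase (hnb _ ih).1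
      rcases Finset.mem_union.mp hmem with h | h
      · exact absurd (by rwa [Function.iterate_succ_apply']) (hcon (n+1))
      · exact h
  obtain ⟨i, hi, j, hj, hij, heq⟩ :=
    Finset.exists_ne_map_eq_of_card_lt_of_maps_to
      (s := Finset.range (Q.card + 1)) (t := Q) (by simp) (fun n _ => hQiter n)
  clear hi hj
  obtain ⟨i, j, hij, heq⟩ : ∃ i j : ℕ, i < j ∧ nb^[i] q = nb^[j] q := by
    rcases hij.lt_or_gt with h | h
    · exact ⟨i, j, h, heq⟩
    · exact ⟨j, i, h, heq.symm⟩
  set a0 := nb^[i] q with ha0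
  set p := j - i with hpdef
  have hp : 0 < p := Nat.sub_pos_of_lt hij
  have hper : nb^[p] a0 = a0 := by
    rw [ha0, ← Function.iterate_add_apply, hpdef, Nat.sub_add_cancel hij.le, ← heq]
  set C := (Finset.range p).image (fun k => nb^[k] a0) with hC
  have ha0C : a0 ∈ C := Finset.mem_image.mpr ⟨0, Finset.mem_range.mpr hp, rfl⟩
  have hCQ : ∀ x ∈ C, x ∈ Q := by
    rintro x hx
    obtain ⟨k, -, rfl⟩ := Finset.mem_image.mp hx
    rw [ha0, ← Function.iterate_add_apply]
    exact hQiter _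
  have hCclosed : ∀ x ∈ C, nb x ∈ C := by
    rintro x hx
    obtain ⟨k, hk, rfl⟩ := Finset.mem_image.mp hx
    rw [← Function.iterate_succ_apply' nb k a0]
    rcases eq_or_lt_of_le (Nat.succ_le_of_lt (Finset.mem_range.mp hk)) with h | h
    · rw [h, hper]; exact ha0C
    · exact Finset.mem_image.mpr ⟨k + 1, Finset.mem_range.mpr h, rfl⟩
  have hCpre : ∀ x ∈ C, ∃ c ∈ C, nb c = x := by
    rintro x hx
    obtain ⟨k, hk, rfl⟩ := Finset.mem_image.mp hx
    have hk' := Finset.mem_range.mp hk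
    rcases Nat.eq_zero_or_pos k with rfl | hkpos
    · refine ⟨nb^[p - 1] a0, Finset.mem_image.mpr ⟨p - 1, Finset.mem_range.mpr (by omega), rfl⟩, ?_⟩
      rw [← Function.iterate_succ_apply' nb (p-1) a0]
      have hps : (p-1).succ = p := by omega
      rw [hps, hper]
      simp
    · refine ⟨nb^[k - 1] a0, Finset.mem_image.mpr ⟨k - 1, Finset.mem_range.mpr (by omega), rfl⟩, ?_⟩
      rw [← Function.iterate_succ_apply' nb (k-1) a0]
      have hks : (k-1).succ = k := by omega
      rw [hks]
  obtain ⟨a, haC, hamax⟩ := C.exists_max_image (fun x => x 0) ⟨a0, ha0C⟩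
  have haQ : a ∈ Q := hCQ a haC
  have haR : a ∈ P ∪ Q := Finset.mem_union_right _ haQ
  have hbC : nb a ∈ C := hCclosed a haC
  obtain ⟨c, hcC, hc⟩ := hCpre a haC
  have hbQ : nb a ∈ Q := hCQ _ hbC
  have hbR : nb a ∈ P ∪ Q := Finset.mem_union_right _ hbQ
  have hcQ : c ∈ Q := hCQ c hcC
  have hcR : c ∈ P ∪ Q := Finset.mem_union_right _ hcQ
  have hbnea : nb a ≠ a := (Finset.mem_erase.mp (hnb a haQ).1).1
  have hcnea : c ≠ a := fun h => hbnea (by rw [← h] at hc ⊢; exact hc)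
  have hb0 : nb a 0 < a 0 :=
    lt_of_le_of_ne (hamax _ hbC) (anti1 P Q hnodom hbR haR hbnea)
  have hc0 : c 0 < a 0 :=
    lt_of_le_of_ne (hamax _ hcC) (anti1 P Q hnodom hcR haR hcnea)
  by_cases hbc : nb a = c
  · exact hnomutual a haQ (nb a) hbQ rfl (by rw [hbc]; exact hc) 
  · have h0 : nb a 0 ≠ c 0 := anti1 P Q hnodom hbR hcR hbc
    rcases h0.lt_or_gt with h | h
    · exact (no_between P Q nb hnodom hnb haQ hcR hcnea).1 ⟨h, hc0⟩
    · have := (no_between P Q nb hnodom hnb hcQ hbR hbc).2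
      rw [hc] at this
      exact this ⟨h, hb0⟩

end Aux
open Classical in
noncomputable def rootFn (P : Finset (Pt 2)) (nb : Pt 2 → Pt 2) (x : Pt 2) : Pt 2 :=
  if hx : ∃ n, nb^[n] x ∈ P then nb^[Nat.find hx] x else x

lemma rootFn_mem (P : Finset (Pt 2)) (nb : Pt 2 → Pt 2) {x : Pt 2}
    (hx : ∃ n, nb^[n] x ∈ P) : rootFn P nb x ∈ P := by
  rw [rootFn, dif_pos hx]
  exact Nat.find_spec hx

lemma rootFn_of_mem (P : Finset (Pt 2)) (nb : Pt 2 → Pt 2) {x : Pt 2}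
    (hxP : x ∈ P) : rootFn P nb x = x := by
  have hx : ∃ n, nb^[n] x ∈ P := ⟨0, hxP⟩
  rw [rootFn, dif_pos hx]
  have h0 : Nat.find hx = 0 := Nat.find_eq_zero hx |>.mpr hxP
  rw [h0]
  simp

lemma rootFn_edge (P Q : Finset (Pt 2)) (nb : Pt 2 → Pt 2)
    (hdisj : ∀ x, x ∈ P → x ∉ Q)
    {a : Pt 2} (haQ : a ∈ Q)
    (ha : ∃ n, nb^[n] a ∈ P) (hb : ∃ n, nb^[n] (nb a) ∈ P) :
    rootFn P nb a = rootFn P nb (nb a) := by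
  rw [rootFn, dif_pos ha, rootFn, dif_pos hb]
  have hna0 : Nat.find ha ≠ 0 := by
    intro h0
    have := Nat.find_spec ha
    rw [h0] at this
    exact hdisj a (by simpa using this) haQ
  obtain ⟨k, hk⟩ := Nat.exists_eq_succ_of_ne_zero hna0
  have hkP : nb^[k] (nb a) ∈ P := by
    have := Nat.find_spec ha
    rwa [hk, Function.iterate_succ_apply] at this
  have hfb : Nat.find hb = k := by
    refine le_antisymm (Nat.find_min' hb hkP) ?_
    by_contra hlt
    push_neg at hlt
    have hsp := Nat.find_spec hb
    have : nb^[Nat.find hb + 1] a ∈ P := by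
      rwa [Function.iterate_succ_apply]
    exact Nat.find_min ha (by omega) this
  rw [hfb, hk, Function.iterate_succ_apply]

lemma reach (P Q : Finset (Pt 2)) (nb : Pt 2 → Pt 2)
    (hnb : ∀ q ∈ Q, isNb (P ∪ Q) q (nb q)) :
    ∀ n : ℕ, ∀ x, x ∈ P ∪ Q → (∀ k < n, nb^[k] x ∉ P) → nb^[n] x ∈ P →
      Relation.ReflTransGen
        (fun a b => (a ∈ Q ∧ b = nb a) ∨ (b ∈ Q ∧ a = nb b)) x (nb^[n] x) := by
  intro n
  induction n with
  | zero => intro x _ _ _; simpa using Relation.ReflTransGen.refl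
  | succ n ih =>
    intro x hx hmin hend
    have hxP : x ∉ P := by simpa using hmin 0 (Nat.succ_pos n)
    have hxQ : x ∈ Q := by
      rcases Finset.mem_union.mp hx with h | h
      · exact absurd h hxP
      · exact h
    have hbR : nb x ∈ P ∪ Q := Finset.mem_of_mem_erase (hnb x hxQ).1
    have hrw : nb^[n + 1] x = nb^[n] (nb x) := Function.iterate_succ_apply nb n x
    rw [hrw]
    refine Relation.ReflTransGen.head (Or.inl ⟨hxQ, rfl⟩) ?_
    refine ih (nb x) hbR (fun k hk => ?_) (by rw [← hrw]; exact hend)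
    have := hmin (k + 1) (by omega)
    rwa [Function.iterate_succ_apply] at this

theorem stmt14 (P Q : Finset (Pt 2)) (nb : Pt 2 → Pt 2)
    (hnodom : ∀ a ∈ P ∪ Q, ∀ b ∈ P ∪ Q, a ≠ b → ¬ sdom a b)
    (hPQ : ∀ p ∈ P, ∀ q ∈ Q, ¬ wdom p q)
    (hnb : ∀ q ∈ Q, isNb (P ∪ Q) q (nb q))
    (hnomutual : ∀ q1 ∈ Q, ∀ q2 ∈ Q, nb q1 = q2 → nb q2 ≠ q1) :
    ∀ r ∈ P ∪ Q, ∃! p, p ∈ P ∧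
      Relation.ReflTransGen
        (fun a b => (a ∈ Q ∧ b = nb a) ∨ (b ∈ Q ∧ a = nb b)) r p := by
  classical
  have hdisj : ∀ x, x ∈ P → x ∉ Q := fun x hxP hxQ => hPQ x hxP x hxQ (fun i => le_rfl)
  have hex : ∀ x ∈ P ∪ Q, ∃ n, nb^[n] x ∈ P := by
    intro x hx
    rcases Finset.mem_union.mp hx with h | h
    · exact ⟨0, h⟩
    · exact escape P Q nb hnodom hnb hnomutual x h
  have key : ∀ x y : Pt 2,
      Relation.ReflTransGen (fun a b => (a ∈ Q ∧ b = nb a) ∨ (b ∈ Q ∧ a = nb b)) x y →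
      rootFn P nb x = rootFn P nb y := by
    intro x y h
    induction h with
    | refl => rfl
    | @tail b c hxb hbc ih =>
      refine ih.trans ?_
      rcases hbc with ⟨hbQ, rfl⟩ | ⟨hcQ, rfl⟩
      · exact rootFn_edge P Q nb hdisj hbQ (hex b (Finset.mem_union_right _ hbQ))
          (hex _ (Finset.mem_of_mem_erase (hnb b hbQ).1))
      · exact (rootFn_edge P Q nb hdisj hcQ (hex c (Finset.mem_union_right _ hcQ))
          (hex _ (Finset.mem_of_mem_erase (hnb c hcQ).1))).symm
  intro r hr
  have hxr := hex r hr
  refine ⟨rootFn P nb r, ⟨rootFn_mem P nb hxr, ?_⟩, ?_⟩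
  · have h1 : rootFn P nb r = nb^[Nat.find hxr] r := by rw [rootFn, dif_pos hxr]
    rw [h1]
    exact reach P Q nb hnb (Nat.find hxr) r hr (fun k hk => Nat.find_min hxr hk)
      (Nat.find_spec hxr)
  · rintro p' ⟨hp'P, hrt⟩
    have h2 := key r p' hrt
    rw [rootFn_of_mem P nb hp'P] at h2
    exact h2.symm
end

section
/- Merging mutual inward neighbors preserves neighbors (2D): let P, Q ⊂ R^2 be as above with q_1, q_2 ∈ Q mutual inward neighbors in P ∪ Q, q* their ideal point (componentwise minimum), and Q' = (Q \ {q_1, q_2}) ∪ {q*}. Then for every q ∈ Q with q ∉ {q_1, q_2}: d(q*, q) = min(d(q_1, q), d(q_2, q)); consequently, if the inward neighbor of q in P ∪ Q was q_1 or q_2, it becomes q* in P ∪ Q', and otherwise it is unchanged. -/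
open Finset

lemma two_pt (a b : Pt 2) :
    dpt a b = (a 0 - min (a 0) (b 0)) + (a 1 - min (a 1) (b 1)) := by
  simp only [dpt, Fin.sum_univ_two]

lemma opp (a b : Pt 2) (hne : a ≠ b) (h1 : ¬ sdom a b) (h2 : ¬ sdom b a) :
    (a 0 < b 0 ∧ b 1 < a 1) ∨ (b 0 < a 0 ∧ a 1 < b 1) := by
  rcases lt_trichotomy (a 0) (b 0) with h | h | h
  · left
    refine ⟨h, ?_⟩
    by_contra hb
    push_neg at hb
    exact h1 ⟨Fin.forall_fin_two.2 ⟨h.le, hb⟩, 0, h⟩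
  · rcases lt_trichotomy (a 1) (b 1) with h' | h' | h'
    · exact absurd ⟨Fin.forall_fin_two.2 ⟨h.le, h'.le⟩, 1, h'⟩ h1
    · exact absurd (funext (Fin.forall_fin_two.2 ⟨h, h'⟩)) hne
    · exact absurd ⟨Fin.forall_fin_two.2 ⟨h.ge, h'.le⟩, 1, h'⟩ h2
  · right
    refine ⟨h, ?_⟩
    by_contra hb
    push_neg at hb
    exact h2 ⟨Fin.forall_fin_two.2 ⟨h.le, hb⟩, 0, h⟩

lemma key (P Q : Finset (Pt 2)) (q1 q2 : Pt 2)
    (hq1 : q1 ∈ Q) (hq2 : q2 ∈ Q) (hne : q1 ≠ q2)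
    (hnodomQ : ∀ a ∈ Q, ∀ b ∈ Q, a ≠ b → ¬ sdom a b)
    (hmut1 : isNb (P ∪ Q) q1 q2)
    (hlt0 : q1 0 < q2 0) (hlt1 : q2 1 < q1 1) :
    ∀ q ∈ Q, q ≠ q1 → q ≠ q2 →
      (dpt (fun j => min (q1 j) (q2 j)) q = min (dpt q1 q) (dpt q2 q)) ∧
      ((isNb (P ∪ Q) q q1 ∨ isNb (P ∪ Q) q q2) →
        isNb (P ∪ insert (fun j => min (q1 j) (q2 j)) ((Q.erase q1).erase q2)) q
          (fun j => min (q1 j) (q2 j))) ∧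
      (∀ a, a ≠ q1 → a ≠ q2 → isNb (P ∪ Q) q a →
        isNb (P ∪ insert (fun j => min (q1 j) (q2 j)) ((Q.erase q1).erase q2)) q a) := by
  intro q hq hne1 hne2
  set qs : Pt 2 := fun j => min (q1 j) (q2 j) with hqs
  have hs0 : qs 0 = q1 0 := min_eq_left hlt0.le
  have hs1 : qs 1 = q2 1 := min_eq_right hlt1.le
  have hq1m : q1 ∈ (P ∪ Q).erase q := mem_erase.2 ⟨Ne.symm hne1, mem_union_right _ hq1⟩
  have hq2m : q2 ∈ (P ∪ Q).erase q := mem_erase.2 ⟨Ne.symm hne2, mem_union_right _ hq2⟩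
  obtain ⟨hd, hqne⟩ :
      (dpt qs q = min (dpt q1 q) (dpt q2 q)) ∧ qs ≠ q := by
    have o1 := opp q q1 hne1 (hnodomQ q hq q1 hq1 hne1)
      (hnodomQ q1 hq1 q hq (Ne.symm hne1))
    have o2 := opp q q2 hne2 (hnodomQ q hq q2 hq2 hne2)
      (hnodomQ q2 hq2 q hq (Ne.symm hne2))
    rcases o1 with ⟨hA0, hA1⟩ | ⟨hA0, hA1⟩ <;> rcases o2 with ⟨hB0, hB1⟩ | ⟨hB0, hB1⟩
    · -- q left of q1 (and left of q2)
      have e1 : dpt q1 q = q1 0 - q 0 := by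
        rw [two_pt, min_eq_right hA0.le, min_eq_left hA1.le]; ring
      have e2 : dpt q2 q = q2 0 - q 0 := by
        rw [two_pt, min_eq_right hB0.le, min_eq_left hB1.le]; ring
      have es : dpt qs q = q1 0 - q 0 := by
        rw [two_pt, hs0, hs1, min_eq_right hA0.le,
          min_eq_left (by linarith : q2 1 ≤ q 1)]
        ring
      refine ⟨by rw [e1, e2, es, min_eq_left (by linarith)], ?_⟩
      intro h
      have : qs 0 = q 0 := congrFun h 0
      rw [hs0] at this; linarith
    · exfalso; linarith
    · -- between: contradiction with hmut1
      exfalso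
      have hqm : q ∈ (P ∪ Q).erase q1 :=
        mem_erase.2 ⟨hne1, mem_union_right _ hq⟩
      have hb := hmut1.2 q hqm
      have e1 : dpt q2 q1 = q2 0 - q1 0 := by
        rw [two_pt, min_eq_right hlt0.le, min_eq_left hlt1.le]; ring
      have e2 : dpt q q1 = q 0 - q1 0 := by
        rw [two_pt, min_eq_right hA0.le, min_eq_left hA1.le]; ring
      rw [e1, e2] at hb; linarith
    · -- q right of q2
      have e1 : dpt q1 q = q1 1 - q 1 := by
        rw [two_pt, min_eq_left hA0.le, min_eq_right hA1.le]; ring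
      have e2 : dpt q2 q = q2 1 - q 1 := by
        rw [two_pt, min_eq_left hB0.le, min_eq_right hB1.le]; ring
      have es : dpt qs q = q2 1 - q 1 := by
        rw [two_pt, hs0, hs1, min_eq_right hB1.le,
          min_eq_left (by linarith : q1 0 ≤ q 0)]
        ring
      refine ⟨by rw [e1, e2, es, min_eq_right (by linarith)], ?_⟩
      intro h
      have : qs 1 = q 1 := congrFun h 1
      rw [hs1] at this; linarith
  refine ⟨hd, ?_, ?_⟩
  · intro h
    have hb : ∀ r ∈ (P ∪ Q).erase q, dpt qs q ≤ dpt r q := by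
      intro r hr
      rw [hd]
      rcases h with h' | h'
      · exact le_trans (min_le_left _ _) (h'.2 r hr)
      · exact le_trans (min_le_right _ _) (h'.2 r hr)
    refine ⟨mem_erase.2 ⟨hqne, mem_union_right _ (mem_insert_self _ _)⟩, ?_⟩
    intro r hr
    obtain ⟨hrq, hrmem⟩ := mem_erase.1 hr
    rcases mem_union.1 hrmem with hrP | hrQ'
    · exact hb r (mem_erase.2 ⟨hrq, mem_union_left _ hrP⟩)
    · rcases mem_insert.1 hrQ' with rfl | hrE
      · exact le_refl _
      · exact hb r (mem_erase.2 ⟨hrq,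
          mem_union_right _ (mem_of_mem_erase (mem_of_mem_erase hrE))⟩)
  · intro a ha1 ha2 hnb
    obtain ⟨hamem, hab⟩ := hnb
    obtain ⟨haq, haPQ⟩ := mem_erase.1 hamem
    refine ⟨mem_erase.2 ⟨haq, ?_⟩, ?_⟩
    · rcases mem_union.1 haPQ with hP | hQ
      · exact mem_union_left _ hP
      · exact mem_union_right _ (mem_insert_of_mem
          (mem_erase.2 ⟨ha2, mem_erase.2 ⟨ha1, hQ⟩⟩))
    · intro r hr
      obtain ⟨hrq, hrmem⟩ := mem_erase.1 hr
      rcases mem_union.1 hrmem with hrP | hrQ'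
      · exact hab r (mem_erase.2 ⟨hrq, mem_union_left _ hrP⟩)
      · rcases mem_insert.1 hrQ' with rfl | hrE
        · rw [hd]
          exact le_min (hab q1 hq1m) (hab q2 hq2m)
        · exact hab r (mem_erase.2 ⟨hrq,
            mem_union_right _ (mem_of_mem_erase (mem_of_mem_erase hrE))⟩)

theorem stmt16 (P Q : Finset (Pt 2)) (q1 q2 : Pt 2)
    (hq1 : q1 ∈ Q) (hq2 : q2 ∈ Q) (hne : q1 ≠ q2)
    (hnodomQ : ∀ a ∈ Q, ∀ b ∈ Q, a ≠ b → ¬ sdom a b)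
    (hmut1 : isNb (P ∪ Q) q1 q2) (hmut2 : isNb (P ∪ Q) q2 q1) :
    ∀ q ∈ Q, q ≠ q1 → q ≠ q2 →
      (dpt (fun j => min (q1 j) (q2 j)) q = min (dpt q1 q) (dpt q2 q)) ∧
      ((isNb (P ∪ Q) q q1 ∨ isNb (P ∪ Q) q q2) →
        isNb (P ∪ insert (fun j => min (q1 j) (q2 j)) ((Q.erase q1).erase q2)) q
          (fun j => min (q1 j) (q2 j))) ∧
      (∀ a, a ≠ q1 → a ≠ q2 → isNb (P ∪ Q) q a →
        isNb (P ∪ insert (fun j => min (q1 j) (q2 j)) ((Q.erase q1).erase q2)) q a) := by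
  rcases opp q1 q2 hne (hnodomQ q1 hq1 q2 hq2 hne)
      (hnodomQ q2 hq2 q1 hq1 hne.symm) with ⟨h0, h1⟩ | ⟨h0, h1⟩
  · exact key P Q q1 q2 hq1 hq2 hne hnodomQ hmut1 h0 h1
  · intro q hq hne1 hne2
    have hfun : (fun j => min (q1 j) (q2 j)) = (fun j => min (q2 j) (q1 j)) :=
      funext fun j => min_comm _ _
    have herase : (Q.erase q1).erase q2 = (Q.erase q2).erase q1 := Finset.erase_right_comm
    have hk := key P Q q2 q1 hq2 hq1 hne.symm hnodomQ hmut2 h0 h1 q hq hne2 hne1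
    refine ⟨?_, ?_, ?_⟩
    · rw [hfun, min_comm (dpt q1 q)]; exact hk.1
    · intro h
      rw [hfun, herase]
      exact hk.2.1 h.symm
    · intro a ha1 ha2 hnb
      rw [hfun, herase]
      exact hk.2.2 a ha2 ha1 hnb
end

section
/- D(P,Q) equals the minimum partition cost: for finite nonempty P, Q ⊂ R^m, the dominance move D(P,Q) (minimum total L1 move distance of points of P so that the moved set weakly dominates Q) equals the minimum over all partitions S = (p_{s1}, Q_{s1}), ..., (p_{sn}, Q_{sn}) of P to Q (p_{si} ∈ P, Q_{si} ⊆ Q, ∪_i Q_{si} = Q) of Σ_i d(p_{si}, Q_{si}). -/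
open Finset

/-! ### Auxiliary lemmas -/

lemma my_inf'_le_self {m : ℕ} (p : Pt m) (S : Finset (Pt m)) (j : Fin m) :
    (insert p S).inf' (insert_nonempty p S) (fun s => s j) ≤ p j :=
  Finset.inf'_le _ (Finset.mem_insert_self p S)

lemma my_dCost_nonneg {m : ℕ} (p : Pt m) (S : Finset (Pt m)) : 0 ≤ dCost p S := by
  apply Finset.sum_nonneg
  intro j _
  have := my_inf'_le_self p S j
  linarith

lemma my_dCost_empty {m : ℕ} (p : Pt m) : dCost p (∅ : Finset (Pt m)) = 0 := by
  unfold dCost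
  simp

lemma my_dCost_union_le {m : ℕ} (p : Pt m) (A B : Finset (Pt m)) :
    dCost p (A ∪ B) ≤ dCost p A + dCost p B := by
  classical
  unfold dCost
  rw [← Finset.sum_add_distrib]
  apply Finset.sum_le_sum
  intro j _
  have h2 : min ((insert p A).inf' (insert_nonempty p A) (fun s => s j))
            ((insert p B).inf' (insert_nonempty p B) (fun s => s j))
      ≤ (insert p (A ∪ B)).inf' (insert_nonempty p (A ∪ B)) (fun s => s j) := by
    apply Finset.le_inf'
    intro x hx
    rcases Finset.mem_insert.mp hx with rfl | hx
    · exact le_trans (min_le_left _ _) (my_inf'_le_self x A j)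
    · rcases Finset.mem_union.mp hx with hx | hx
      · exact le_trans (min_le_left _ _)
          (Finset.inf'_le _ (Finset.mem_insert_of_mem hx))
      · exact le_trans (min_le_right _ _)
          (Finset.inf'_le _ (Finset.mem_insert_of_mem hx))
  have ha := my_inf'_le_self p A j
  have hb := my_inf'_le_self p B j
  rcases le_total ((insert p A).inf' (insert_nonempty p A) (fun s => s j))
      ((insert p B).inf' (insert_nonempty p B) (fun s => s j)) with h | h
  · rw [min_eq_left h] at h2; linarith
  · rw [min_eq_right h] at h2; linarith

lemma my_dCost_le_l1 {m : ℕ} (p x : Pt m) (S : Finset (Pt m))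
    (h : ∀ q ∈ S, wdom x q) : dCost p S ≤ l1 p x := by
  unfold dCost l1
  apply Finset.sum_le_sum
  intro j _
  have hge : min (p j) (x j) ≤ (insert p S).inf' (insert_nonempty p S) (fun s => s j) := by
    apply Finset.le_inf'
    intro b hb
    rcases Finset.mem_insert.mp hb with rfl | hb
    · exact min_le_left _ _
    · exact le_trans (min_le_right _ _) (h b hb j)
  rcases le_total (p j) (x j) with h' | h'
  · rw [min_eq_left h'] at hge
    have := abs_nonneg (p j - x j)
    linarith
  · rw [min_eq_right h'] at hge
    have : |p j - x j| = p j - x j := abs_of_nonneg (by linarith)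
    linarith

lemma my_l1_ideal {m : ℕ} (p : Pt m) (S : Finset (Pt m)) :
    l1 p (fun j => (insert p S).inf' (insert_nonempty p S) (fun s => s j)) = dCost p S := by
  unfold l1 dCost
  apply Finset.sum_congr rfl
  intro j _
  have := my_inf'_le_self p S j
  rw [abs_of_nonneg (by linarith)]

lemma my_mem_unionSnd {m : ℕ} (q : Pt m) (S : List (Pt m × Finset (Pt m))) :
    q ∈ unionSnd S ↔ ∃ g ∈ S, q ∈ g.2 := by
  induction S with
  | nil => simp [unionSnd]
  | cons g S ih =>
    simp only [unionSnd, List.foldr_cons, Finset.mem_union, List.mem_cons]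
    constructor
    · rintro (h | h)
      · exact ⟨g, Or.inl rfl, h⟩
      · obtain ⟨g', hg', hq⟩ := ih.mp h
        exact ⟨g', Or.inr hg', hq⟩
    · rintro ⟨g', (rfl | hg'), hq⟩
      · exact Or.inl hq
      · exact Or.inr (ih.mpr ⟨g', hg', hq⟩)

lemma my_pcost_nonneg {m : ℕ} (S : List (Pt m × Finset (Pt m))) : 0 ≤ pcost S := by
  apply List.sum_nonneg
  intro x hx
  obtain ⟨g, _, rfl⟩ := List.mem_map.mp hx
  exact my_dCost_nonneg _ _

open scoped Classical in
lemma my_sum_dCost_le_pcost {m : ℕ} (P : Finset (Pt m)) (S : List (Pt m × Finset (Pt m)))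
    (hS : ∀ g ∈ S, g.1 ∈ P) :
    ∑ p ∈ P, dCost p (unionSnd (S.filter (fun g => g.1 = p))) ≤ pcost S := by
  classical
  induction S with
  | nil =>
    simp [unionSnd, pcost, my_dCost_empty]
  | cons g S ih =>
    have hg1 : g.1 ∈ P := hS g List.mem_cons_self
    have hS' : ∀ g' ∈ S, g'.1 ∈ P := fun g' hg' => hS g' (List.mem_cons_of_mem g hg')
    have key : ∀ p ∈ P,
        dCost p (unionSnd ((g :: S).filter (fun g' => g'.1 = p)))
          ≤ (if p = g.1 then dCost g.1 g.2 else 0)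
            + dCost p (unionSnd (S.filter (fun g' => g'.1 = p))) := by
      intro p _
      by_cases hp : g.1 = p
      · subst hp
        rw [if_pos rfl]
        have : (g :: S).filter (fun g' => g'.1 = g.1)
            = g :: S.filter (fun g' => g'.1 = g.1) := by
          rw [List.filter_cons]
          simp
        rw [this]
        have h2 : unionSnd (g :: S.filter (fun g' => g'.1 = g.1))
            = g.2 ∪ unionSnd (S.filter (fun g' => g'.1 = g.1)) := rfl
        rw [h2]
        exact my_dCost_union_le _ _ _
      · rw [if_neg (fun h => hp h.symm)]
        have : (g :: S).filter (fun g' => g'.1 = p)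
            = S.filter (fun g' => g'.1 = p) := by
          rw [List.filter_cons]
          simp [hp]
        rw [this, zero_add]
    calc ∑ p ∈ P, dCost p (unionSnd ((g :: S).filter (fun g' => g'.1 = p)))
        ≤ ∑ p ∈ P, ((if p = g.1 then dCost g.1 g.2 else 0)
            + dCost p (unionSnd (S.filter (fun g' => g'.1 = p)))) :=
          Finset.sum_le_sum key
      _ = (∑ p ∈ P, if p = g.1 then dCost g.1 g.2 else 0)
            + ∑ p ∈ P, dCost p (unionSnd (S.filter (fun g' => g'.1 = p))) :=
          Finset.sum_add_distrib
      _ ≤ dCost g.1 g.2 + pcost S := by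
          rw [Finset.sum_ite_eq' P g.1 (fun _ => dCost g.1 g.2), if_pos hg1]
          exact (add_le_add_iff_left _).mpr (ih hS')
      _ = pcost (g :: S) := by simp [pcost]

theorem stmt19 {m : ℕ} (P Q : Finset (Pt m)) (hP : P.Nonempty) (hQ : Q.Nonempty) :
    DoM P Q = sInf { c | ∃ S, IsPartition P Q S ∧ c = pcost S } := by
  classical
  obtain ⟨p0, hp0⟩ := hP
  set A := { c | ∃ f : Pt m → Pt m, setWDom (P.image f) Q ∧ c = ∑ p ∈ P, l1 p (f p) } with hA
  set B := { c | ∃ S, IsPartition P Q S ∧ c = pcost S } with hB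
  -- Direction 1: each partition gives a move of at most that cost.
  have hBA : ∀ c ∈ B, ∃ c' ∈ A, c' ≤ c := by
    rintro c ⟨S, ⟨hSg, hScover⟩, rfl⟩
    set U : Pt m → Finset (Pt m) :=
      fun p => unionSnd (S.filter (fun g => g.1 = p)) with hU
    set f : Pt m → Pt m :=
      fun p j => (insert p (U p)).inf' (insert_nonempty p (U p)) (fun s => s j) with hf
    refine ⟨∑ p ∈ P, l1 p (f p), ⟨f, ?_, rfl⟩, ?_⟩
    · -- setWDom (P.image f) Q
      intro q hq
      rw [← hScover] at hq
      obtain ⟨g, hgS, hqg⟩ := (my_mem_unionSnd q S).mp hq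
      refine ⟨f g.1, Finset.mem_image_of_mem f (hSg g hgS).1, ?_⟩
      intro j
      have hqU : q ∈ U g.1 := by
        apply (my_mem_unionSnd q _).mpr
        exact ⟨g, List.mem_filter.mpr ⟨hgS, by simp⟩, hqg⟩
      exact Finset.inf'_le _ (Finset.mem_insert_of_mem hqU)
    · -- cost bound
      have h1 : ∀ p ∈ P, l1 p (f p) = dCost p (U p) := fun p _ => my_l1_ideal p (U p)
      rw [Finset.sum_congr rfl h1]
      exact my_sum_dCost_le_pcost P S (fun g hg => (hSg g hg).1)
  -- Direction 2: each move gives a partition of at most that cost.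
  have hAB : ∀ c ∈ A, ∃ c' ∈ B, c' ≤ c := by
    rintro c ⟨f, hfdom, rfl⟩
    have hch : ∀ q, q ∈ Q → ∃ p, p ∈ P ∧ wdom (f p) q := by
      intro q hq
      obtain ⟨x, hx, hxq⟩ := hfdom q hq
      obtain ⟨p, hp, rfl⟩ := Finset.mem_image.mp hx
      exact ⟨p, hp, hxq⟩
    choose! ch hchP hchW using hch
    set S : List (Pt m × Finset (Pt m)) :=
      P.toList.map (fun p => (p, Q.filter (fun q => ch q = p))) with hS
    have hpart : IsPartition P Q S := by
      constructor
      · intro g hg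
        obtain ⟨p, hp, rfl⟩ := List.mem_map.mp hg
        exact ⟨Finset.mem_toList.mp hp, Finset.filter_subset _ _⟩
      · ext q
        rw [my_mem_unionSnd]
        constructor
        · rintro ⟨g, hg, hq⟩
          obtain ⟨p, hp, rfl⟩ := List.mem_map.mp hg
          exact (Finset.mem_filter.mp hq).1
        · intro hq
          refine ⟨(ch q, Q.filter (fun q' => ch q' = ch q)),
            List.mem_map.mpr ⟨ch q, Finset.mem_toList.mpr (hchP q hq), rfl⟩, ?_⟩
          exact Finset.mem_filter.mpr ⟨hq, rfl⟩
    refine ⟨pcost S, ⟨S, hpart, rfl⟩, ?_⟩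
    have : pcost S = ∑ p ∈ P, dCost p (Q.filter (fun q => ch q = p)) := by
      rw [pcost, hS, List.map_map]
      exact Finset.sum_map_toList P _
    rw [this]
    apply Finset.sum_le_sum
    intro p _
    apply my_dCost_le_l1
    intro q hq
    obtain ⟨hqQ, hqp⟩ := Finset.mem_filter.mp hq
    rw [← hqp]
    exact hchW q hqQ
  -- Bounds and nonemptiness
  have hBne : B.Nonempty := by
    refine ⟨pcost [(p0, Q)], [(p0, Q)], ⟨?_, ?_⟩, rfl⟩
    · rintro g hg
      simp only [List.mem_cons, List.not_mem_nil, or_false] at hg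
      subst hg
      exact ⟨hp0, le_refl Q⟩
    · simp [unionSnd]
  have hAne : A.Nonempty := by
    obtain ⟨c, hc⟩ := hBne
    obtain ⟨c', hc', _⟩ := hBA c hc
    exact ⟨c', hc'⟩
  have hAbdd : BddBelow A := by
    refine ⟨0, ?_⟩
    rintro c ⟨f, _, rfl⟩
    exact Finset.sum_nonneg fun p _ => Finset.sum_nonneg fun j _ => abs_nonneg _
  have hBbdd : BddBelow B := by
    refine ⟨0, ?_⟩
    rintro c ⟨S, _, rfl⟩
    exact my_pcost_nonneg S
  rw [DoM]
  apply le_antisymm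
  · apply le_csInf hBne
    intro c hc
    obtain ⟨c', hc', hle⟩ := hBA c hc
    exact le_trans (csInf_le hAbdd hc') hle
  · apply le_csInf hAne
    intro c hc
    obtain ⟨c', hc', hle⟩ := hAB c hc
    exact le_trans (csInf_le hBbdd hc') hle
end
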